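/- Let (z, w) be a unit vector with entries in Z[1/√2, i] with sde(|z|², √2) ≥ 4. Then for each s ∈ {−1, 0, 1} there exists k ∈ {0, 1, 2, 3} such that sde(|(z + wω^k)/√2|², √2) − sde(|z|², √2) = s. -/

import Mathlib

noncomputable section

open Complex

/-- The eighth root of unity ω = e^{iπ/4}. -/
def omg : ℂ := Complex.exp (Real.pi * Complex.I / 4)

/-- √2 as a complex number. -/
def rt2 : ℂ := (Real.sqrt 2 : ℝ)

/-- Membership in the ring Z[ω] = {a + bω + cω² + dω³ : a,b,c,d ∈ ℤ}. -/
def Zomega (z : ℂ) : Prop :=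
  ∃ a b c d : ℤ, z = a + b * omg + c * omg ^ 2 + d * omg ^ 3

/-- Membership in the ring Z[1/√2, i] = {u/(√2)^n : u ∈ Z[ω], n ∈ ℕ}. -/
def ZRoot2i (z : ℂ) : Prop :=
  ∃ u : ℂ, Zomega u ∧ ∃ n : ℕ, z = u / rt2 ^ n

/-- `b` divides `z` within the ring Z[ω]. -/
def ZDvd (b z : ℂ) : Prop := ∃ q : ℂ, Zomega q ∧ z = b * q

/-- `k` is the greatest dividing exponent of base `b` with respect to `z`:
`b^k` divides `z` in Z[ω], while `b^(k+1)` does not. -/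
def IsGde (b z : ℂ) (k : ℕ) : Prop := ZDvd (b ^ k) z ∧ ¬ ZDvd (b ^ (k + 1)) z

/-- `k` is the smallest denominator exponent of base √2 with respect to `z`:
the smallest integer `k` such that `z·(√2)^k ∈ Z[ω]`. -/
def IsSde (z : ℂ) (k : ℤ) : Prop :=
  Zomega (z * rt2 ^ k) ∧ ∀ j : ℤ, Zomega (z * rt2 ^ j) → k ≤ j

/-! ### Basic facts about ω and √2 -/

lemma rt2_ne : rt2 ≠ 0 := by
  simpa [rt2] using (by positivity : (0:ℝ) < Real.sqrt 2).ne'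

lemma rt2_sq : rt2 ^ 2 = 2 := by
  rw [rt2, ← Complex.ofReal_pow, Real.sq_sqrt (by norm_num : (2:ℝ) ≥ 0)]
  norm_num

lemma omg_eq : omg = (Real.sqrt 2 / 2 : ℝ) + (Real.sqrt 2 / 2 : ℝ) * I := by
  have h : (Real.pi : ℂ) * Complex.I / 4 = ((Real.pi / 4 : ℝ) : ℂ) * I := by
    push_cast; ring
  rw [omg, h, Complex.exp_mul_I, ← Complex.ofReal_cos, ← Complex.ofReal_sin,
    Real.cos_pi_div_four, Real.sin_pi_div_four]

lemma omg_eq' : omg = rt2 / 2 + rt2 / 2 * I := by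
  rw [omg_eq, rt2]; push_cast; ring

lemma omg_sq : omg ^ 2 = I := by
  have h := rt2_sq
  rw [omg_eq']
  linear_combination ((1 + 2*I + I^2)/4) * h + (1/2 : ℂ) * Complex.I_sq

lemma omg_pow4 : omg ^ 4 = -1 := by
  have : omg ^ 4 = (omg ^ 2) ^ 2 := by ring
  rw [this, omg_sq, Complex.I_sq]

lemma rt2_eq : omg - omg ^ 3 = rt2 := by
  have h := rt2_sq
  rw [omg_eq']
  linear_combination (rt2*(-1/8 - 3/8*I - 3/8*I^2 - 1/8*I^3)) * h + (-(3/4)*rt2 - (1/4)*rt2*I) * Complex.I_sq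

lemma conj_rt2 : (starRingEnd ℂ) rt2 = rt2 := Complex.conj_ofReal _

lemma conj_omg : (starRingEnd ℂ) omg = -omg ^ 3 := by
  have h := rt2_sq
  rw [omg_eq']
  simp only [map_add, map_mul, map_div₀, Complex.conj_ofReal, Complex.conj_I, conj_rt2, map_ofNat]
  linear_combination (rt2*(1/8 + 3/8*I + 3/8*I^2 + 1/8*I^3)) * h + ((3/4)*rt2 + (1/4)*rt2*I) * Complex.I_sq

/-! ### The ring Z[ω] as integer quadruples -/

@[ext] structure Z4 where
  a : ℤ
  b : ℤ
  c : ℤ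
  d : ℤ

namespace Z4

def add (x y : Z4) : Z4 := ⟨x.a + y.a, x.b + y.b, x.c + y.c, x.d + y.d⟩
def sub (x y : Z4) : Z4 := ⟨x.a - y.a, x.b - y.b, x.c - y.c, x.d - y.d⟩
def mul (x y : Z4) : Z4 :=
  ⟨x.a*y.a - x.b*y.d - x.c*y.c - x.d*y.b,
   x.a*y.b + x.b*y.a - x.c*y.d - x.d*y.c,
   x.a*y.c + x.b*y.b + x.c*y.a - x.d*y.d,
   x.a*y.d + x.b*y.c + x.c*y.b + x.d*y.a⟩
def cnj (x : Z4) : Z4 := ⟨x.a, -x.d, -x.c, -x.b⟩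
def toC (x : Z4) : ℂ := (x.a : ℂ) + x.b * omg + x.c * omg ^ 2 + x.d * omg ^ 3
def rmul (x : Z4) : Z4 := ⟨x.b - x.d, x.a + x.c, x.b + x.d, x.c - x.a⟩
def rpow (t : ℕ) (x : Z4) : Z4 := rmul^[t] x

lemma zomega_iff (z : ℂ) : Zomega z ↔ ∃ v : Z4, z = toC v := by
  constructor
  · rintro ⟨a, b, c, d, h⟩; exact ⟨⟨a, b, c, d⟩, h⟩
  · rintro ⟨v, h⟩; exact ⟨v.a, v.b, v.c, v.d, h⟩

lemma toC_add (x y : Z4) : toC (add x y) = toC x + toC y := by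
  simp [toC, add]; push_cast; ring

lemma toC_sub (x y : Z4) : toC (sub x y) = toC x - toC y := by
  simp [toC, sub]; push_cast; ring

lemma toC_mul (x y : Z4) : toC (mul x y) = toC x * toC y := by
  have h := omg_pow4
  simp only [toC, mul]
  push_cast
  linear_combination (-(x.b*y.d + x.c*y.c + x.d*y.b) - (x.c*y.d + x.d*y.c)*omg - (x.d*y.d)*omg^2) * h

lemma toC_cnj (x : Z4) : toC (cnj x) = (starRingEnd ℂ) (toC x) := by
  simp only [toC, cnj, map_add, map_mul, map_pow, conj_omg, map_intCast]
  have h := omg_pow4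
  push_cast
  linear_combination (x.d * omg * (omg^4 - 1) - x.c * omg^2) * h

lemma int_rt2 (p q : ℤ) (h : (p:ℝ) + q * Real.sqrt 2 = 0) : p = 0 ∧ q = 0 := by
  have hq : q = 0 := by
    by_contra hq
    have hq' : (q:ℝ) ≠ 0 := Int.cast_ne_zero.mpr hq
    have h2 : Real.sqrt 2 = ((-p / q : ℚ) : ℝ) := by
      push_cast
      field_simp
      linarith
    exact irrational_sqrt_two ⟨_, h2.symm⟩
  subst hq
  simp only [Int.cast_zero, zero_mul, add_zero] at h
  exact ⟨by exact_mod_cast h, rfl⟩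

lemma toC_eq_zero (v : Z4) (h : toC v = 0) : v = ⟨0,0,0,0⟩ := by
  have h3 : omg ^ 3 = I * (rt2/2 + rt2/2 * I) := by
    have : omg ^ 3 = omg ^ 2 * omg := by ring
    rw [this, omg_sq, ← omg_eq']
  have key : ((v.a : ℝ) + (v.b - v.d) * (Real.sqrt 2/2) : ℝ) + ((v.c : ℝ) + (v.b + v.d) * (Real.sqrt 2/2) : ℝ) * I = 0 := by
    rw [← h, toC, h3, omg_sq, omg_eq', rt2]
    push_cast
    linear_combination (-v.d * (Real.sqrt 2 : ℂ)/2) * Complex.I_sq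
  rw [Complex.ext_iff] at key
  simp only [Complex.add_re, Complex.add_im, Complex.ofReal_re, Complex.ofReal_im,
    Complex.mul_re, Complex.mul_im, Complex.I_re, Complex.I_im, Complex.zero_re,
    Complex.zero_im] at key
  obtain ⟨k1, k2⟩ := key
  have e1 : ((2 * v.a : ℤ) : ℝ) + ((v.b - v.d : ℤ) : ℝ) * Real.sqrt 2 = 0 := by
    push_cast; nlinarith [k1]
  have e2 : ((2 * v.c : ℤ) : ℝ) + ((v.b + v.d : ℤ) : ℝ) * Real.sqrt 2 = 0 := by
    push_cast; nlinarith [k2]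
  obtain ⟨p1, q1⟩ := int_rt2 _ _ e1
  obtain ⟨p2, q2⟩ := int_rt2 _ _ e2
  ext <;> simp <;> omega

lemma toC_injective : Function.Injective toC := by
  intro x y h
  have h0 : toC (sub x y) = 0 := by rw [toC_sub, h, sub_self]
  have := toC_eq_zero _ h0
  have ha := congrArg Z4.a this
  have hb := congrArg Z4.b this
  have hc := congrArg Z4.c this
  have hd := congrArg Z4.d this
  simp [sub] at ha hb hc hd
  ext <;> omega

/-! ### Multiplication by √2 -/

lemma toC_rmul (x : Z4) : toC (rmul x) = rt2 * toC x := by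
  rw [← rt2_eq]
  simp only [toC, rmul]
  push_cast
  linear_combination ((x.b - x.d) + x.c * omg + x.d * omg^2) * omg_pow4

lemma rpow_succ' (t : ℕ) (x : Z4) : rpow (t+1) x = rpow t (rmul x) :=
  Function.iterate_succ_apply rmul t x

lemma rpow_succ (t : ℕ) (x : Z4) : rpow (t+1) x = rmul (rpow t x) :=
  Function.iterate_succ_apply' rmul t x

lemma rpow_add (s t : ℕ) (x : Z4) : rpow (s + t) x = rpow s (rpow t x) :=
  Function.iterate_add_apply rmul s t x

lemma toC_rpow (t : ℕ) (x : Z4) : toC (rpow t x) = rt2 ^ t * toC x := by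
  induction t with
  | zero => simp [rpow]
  | succ k ih => rw [rpow_succ, toC_rmul, ih]; ring

lemma rmul_inj {x y : Z4} (h : rmul x = rmul y) : x = y := by
  have h1 := congrArg Z4.a h
  have h2 := congrArg Z4.b h
  have h3 := congrArg Z4.c h
  have h4 := congrArg Z4.d h
  simp only [rmul] at h1 h2 h3 h4
  ext <;> omega

lemma rpow_inj (t : ℕ) {x y : Z4} (h : rpow t x = rpow t y) : x = y := by
  induction t with
  | zero => simpa [rpow] using h
  | succ k ih => rw [rpow_succ, rpow_succ] at h; exact ih (rmul_inj h)

/-! ### Pairs, representing Z[√2] -/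

def pmul (x y : ℤ × ℤ) : ℤ × ℤ := (x.1*y.1 + 2*x.2*y.2, x.1*y.2 + x.2*y.1)
def ps (x : ℤ × ℤ) : ℤ × ℤ := (2*x.2, x.1)
def pspow (t : ℕ) (x : ℤ × ℤ) : ℤ × ℤ := ps^[t] x
def toZ4 (x : ℤ × ℤ) : Z4 := ⟨x.1, x.2, 0, -x.2⟩

lemma pspow_succ' (t : ℕ) (x : ℤ × ℤ) : pspow (t+1) x = pspow t (ps x) :=
  Function.iterate_succ_apply ps t x
lemma pspow_succ (t : ℕ) (x : ℤ × ℤ) : pspow (t+1) x = ps (pspow t x) :=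
  Function.iterate_succ_apply' ps t x
lemma pspow_add (s t : ℕ) (x : ℤ × ℤ) : pspow (s + t) x = pspow s (pspow t x) :=
  Function.iterate_add_apply ps s t x

lemma rmul_toZ4 (x : ℤ × ℤ) : rmul (toZ4 x) = toZ4 (ps x) := by
  ext <;> simp [rmul, toZ4, ps] <;> ring

lemma rpow_toZ4 (t : ℕ) (x : ℤ × ℤ) : rpow t (toZ4 x) = toZ4 (pspow t x) := by
  induction t with
  | zero => simp [rpow, pspow]
  | succ k ih => rw [rpow_succ, pspow_succ, ih, rmul_toZ4]

lemma toZ4_inj {x y : ℤ × ℤ} (h : toZ4 x = toZ4 y) : x = y := by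
  have h1 := congrArg Z4.a h
  have h2 := congrArg Z4.b h
  simp only [toZ4] at h1 h2
  exact Prod.ext h1 h2

lemma ps_inj {x y : ℤ × ℤ} (h : ps x = ps y) : x = y := by
  rw [Prod.ext_iff] at h ⊢
  simp only [ps] at h
  omega

lemma pspow_double (t : ℕ) (x : ℤ × ℤ) :
    pspow t (2 * x.1, 2 * x.2) = (2 * (pspow t x).1, 2 * (pspow t x).2) := by
  induction t with
  | zero => simp [pspow]
  | succ k ih => rw [pspow_succ, pspow_succ, ih]; simp [ps]

lemma pspow_two (k : ℕ) : pspow (2 * k) (1, 0) = ((2:ℤ) ^ k, 0) := by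
  induction k with
  | zero => simp [pspow]
  | succ m ih =>
    have e : 2 * (m + 1) = (2 * m) + 2 := by ring
    rw [e, pspow_add]
    have h2 : pspow 2 ((1:ℤ), (0:ℤ)) = (2 * 1, 2 * 0) := by
      show ps (ps _) = _
      simp [ps]
    rw [h2]
    have hd := pspow_double (2*m) ((1:ℤ), (0:ℤ))
    simp only [mul_zero] at hd ⊢
    rw [hd, ih]
    simp [pow_succ]
    ring

lemma toZ4_add (x y : ℤ × ℤ) : add (toZ4 x) (toZ4 y) = toZ4 (x + y) := by
  ext <;> simp [add, toZ4] <;> ring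

lemma pspow_sub (t : ℕ) (x y : ℤ × ℤ) : pspow t (x - y) = pspow t x - pspow t y := by
  induction t with
  | zero => simp [pspow]
  | succ k ih =>
    rw [pspow_succ, pspow_succ, pspow_succ, ih]
    rw [Prod.ext_iff]
    constructor <;> simp [ps] <;> ring

/-! ### The norm to Z[√2] -/

def N (x : Z4) : ℤ × ℤ :=
  (x.a^2 + x.b^2 + x.c^2 + x.d^2, x.a*x.b + x.b*x.c + x.c*x.d - x.d*x.a)

lemma N_spec (x : Z4) : mul x (cnj x) = toZ4 (N x) := by
  ext <;> simp [mul, cnj, toZ4, N] <;> ring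

lemma N_mulconj (x y : Z4) : N (mul x (cnj y)) = pmul (N x) (N y) := by
  rw [Prod.ext_iff]
  constructor <;> simp [mul, cnj, N, pmul] <;> ring

lemma N_rmul (x : Z4) : N (rmul x) = ps (ps (N x)) := by
  rw [Prod.ext_iff]
  constructor <;> simp [rmul, N, ps] <;> ring

lemma dvd2_of_parity (x : Z4) (h1 : (x.a + x.c) % 2 = 0) (h2 : (x.b + x.d) % 2 = 0) :
    ∃ y, x = rmul y := by
  refine ⟨⟨(x.b - x.d)/2, (x.a + x.c)/2, (x.b + x.d)/2, (x.c - x.a)/2⟩, ?_⟩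
  ext <;> simp [rmul] <;> omega

lemma parity_of_dvd (y : Z4) :
    ((rmul y).a + (rmul y).c) % 2 = 0 ∧ ((rmul y).b + (rmul y).d) % 2 = 0 := by
  simp [rmul]; omega

lemma zmod2_key : ∀ a b c d : ZMod 2, a^2+b^2+c^2+d^2 = 0 → a*b+b*c+c*d-d*a = 0 →
    (a + c = 0 ∧ b + d = 0) := by decide

lemma N_even (u : Z4) (h1 : (N u).1 % 2 = 0) (h2 : (N u).2 % 2 = 0) :
    (u.a + u.c) % 2 = 0 ∧ (u.b + u.d) % 2 = 0 := by
  have c1 : (((N u).1 : ℤ) : ZMod 2) = 0 := by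
    rw [ZMod.intCast_zmod_eq_zero_iff_dvd]; omega
  have c2 : (((N u).2 : ℤ) : ZMod 2) = 0 := by
    rw [ZMod.intCast_zmod_eq_zero_iff_dvd]; omega
  simp only [N] at c1 c2
  push_cast at c1 c2
  obtain ⟨e1, e2⟩ := zmod2_key (u.a : ZMod 2) (u.b : ZMod 2) (u.c : ZMod 2) (u.d : ZMod 2) c1 c2
  constructor
  · have : (((u.a + u.c : ℤ)) : ZMod 2) = 0 := by push_cast; exact e1
    rw [ZMod.intCast_zmod_eq_zero_iff_dvd] at this
    omega
  · have : (((u.b + u.d : ℤ)) : ZMod 2) = 0 := by push_cast; exact e2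
    rw [ZMod.intCast_zmod_eq_zero_iff_dvd] at this
    omega

lemma extract : ∀ (t : ℕ) (u : Z4) (w : ℤ × ℤ), N u = pspow (2*t) w → w.1 % 2 = 1 →
    ∃ u₁ : Z4, u = rpow t u₁ ∧ N u₁ = w := by
  intro t
  induction t with
  | zero => intro u w h _; exact ⟨u, rfl, by simpa [pspow] using h⟩
  | succ k ih =>
    intro u w h hw
    have h2 : N u = ps (ps (pspow (2*k) w)) := by
      have e : 2 * (k+1) = (2*k + 1) + 1 := by ring
      rw [e, pspow_succ, pspow_succ] at h
      exact h
    have he1 : (N u).1 % 2 = 0 := by rw [h2]; simp only [ps]; omega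
    have he2 : (N u).2 % 2 = 0 := by rw [h2]; simp only [ps]; omega
    obtain ⟨hp1, hp2⟩ := N_even u he1 he2
    obtain ⟨u', rfl⟩ := dvd2_of_parity u hp1 hp2
    rw [N_rmul] at h2
    have h3 : N u' = pspow (2*k) w := ps_inj (ps_inj h2)
    obtain ⟨u₁, hu, hN⟩ := ih u' w h3 hw
    exact ⟨u₁, by rw [hu, ← rpow_succ], hN⟩

lemma real_extract : ∀ (t : ℕ) (v : ℤ × ℤ) (γ : Z4), toZ4 v = rpow t γ →
    ∃ x' : ℤ × ℤ, γ = toZ4 x' ∧ v = pspow t x' := by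
  intro t
  induction t with
  | zero => intro v γ h; exact ⟨v, by simpa [rpow] using h.symm, by simp [pspow]⟩
  | succ k ih =>
    intro v γ h
    rw [rpow_succ'] at h
    obtain ⟨x'', hg, hv⟩ := ih v (rmul γ) h
    have h1 := congrArg Z4.a hg
    have h2 := congrArg Z4.b hg
    have h3 := congrArg Z4.c hg
    have h4 := congrArg Z4.d hg
    simp only [rmul, toZ4] at h1 h2 h3 h4
    refine ⟨(x''.2, γ.b), ?_, ?_⟩
    · ext <;> simp [toZ4] <;> omega
    · rw [pspow_succ', hv]
      congr 1
      rw [Prod.ext_iff]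
      simp [ps]
      omega

end Z4

/-! ### Finite checks modulo 4 -/

lemma zmod4_key1 : ∀ p q a b c d : ZMod 4,
    (p = 1 ∨ p = 3) →
    a^2+b^2+c^2+d^2 = -(p^2+2*q^2) →
    a*b+b*c+c*d-d*a = -(2*p*q) →
    ((b-d=1 ∨ b-d=3) ∨ (c+a=1 ∨ c+a=3) ∨ (d+b=1 ∨ d+b=3) ∨ (c-a=1 ∨ c-a=3)) := by decide

lemma zmod4_key2 : ∀ p q a b c d : ZMod 4,
    (p = 1 ∨ p = 3) →
    a^2+b^2+c^2+d^2 = -(p^2+2*q^2) →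
    a*b+b*c+c*d-d*a = -(2*p*q) →
    ( ((a=1∨a=3) ∧ (b-d=0∨b-d=2)) ∨ ((b=1∨b=3) ∧ (c+a=0∨c+a=2)) ∨
      ((c=1∨c=3) ∧ (d+b=0∨d+b=2)) ∨ ((d=1∨d=3) ∧ (c-a=0∨c-a=2)) ) := by decide

lemma zmod4_key3 : ∀ p q a b c d : ZMod 4,
    (p = 1 ∨ p = 3) →
    a^2+b^2+c^2+d^2 = -(p^2+2*q^2) →
    a*b+b*c+c*d-d*a = -(2*p*q) →
    ( ((a=0∨a=2) ∧ (b-d=2 ∨ b-d=2)) ∨ ((b=0∨b=2) ∧ (c+a=2 ∨ c+a=2)) ∨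
      ((c=0∨c=2) ∧ (d+b=2 ∨ d+b=2)) ∨ ((d=0∨d=2) ∧ (c-a=2 ∨ c-a=2)) ) := by decide

lemma cast4_eq (x : ℤ) : (x : ZMod 4) = ((x % 4 : ℤ) : ZMod 4) := by
  rw [ZMod.intCast_eq_intCast_iff]
  exact (Int.emod_emod_of_dvd x dvd_rfl).symm

lemma mod4_cases (x : ℤ) :
    ((x:ZMod 4) = 0 ∧ x % 4 = 0) ∨ ((x:ZMod 4) = 1 ∧ x % 4 = 1) ∨
    ((x:ZMod 4) = 2 ∧ x % 4 = 2) ∨ ((x:ZMod 4) = 3 ∧ x % 4 = 3) := by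
  have h := cast4_eq x
  have hc : x % 4 = 0 ∨ x % 4 = 1 ∨ x % 4 = 2 ∨ x % 4 = 3 := by omega
  rcases hc with h0|h0|h0|h0 <;> rw [h0] at h <;> norm_num at h
  · exact Or.inl ⟨h, h0⟩
  · exact Or.inr (Or.inl ⟨h, h0⟩)
  · exact Or.inr (Or.inr (Or.inl ⟨h, h0⟩))
  · exact Or.inr (Or.inr (Or.inr ⟨h, h0⟩))

lemma odd_cast {x : ℤ} (h : x % 2 = 1) : (x : ZMod 4) = 1 ∨ (x : ZMod 4) = 3 := by
  rcases mod4_cases x with ⟨h1,h2⟩|⟨h1,h2⟩|⟨h1,h2⟩|⟨h1,h2⟩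
  · omega
  · exact Or.inl h1
  · omega
  · exact Or.inr h1

lemma zero4_cast {x : ℤ} (h : x % 4 = 0) : (x : ZMod 4) = 0 := by
  rcases mod4_cases x with ⟨h1,h2⟩|⟨h1,h2⟩|⟨h1,h2⟩|⟨h1,h2⟩ <;> first | exact h1 | omega

lemma cast_odd {x : ℤ} (h : (x:ZMod 4) = 1 ∨ (x:ZMod 4) = 3) : x % 2 = 1 := by
  rcases mod4_cases x with ⟨h1,h2⟩|⟨h1,h2⟩|⟨h1,h2⟩|⟨h1,h2⟩ <;>
    rcases h with h|h <;> rw [h1] at h <;> first | omega | (exact absurd h (by decide))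

lemma cast_even {x : ℤ} (h : (x:ZMod 4) = 0 ∨ (x:ZMod 4) = 2) : x % 2 = 0 := by
  rcases mod4_cases x with ⟨h1,h2⟩|⟨h1,h2⟩|⟨h1,h2⟩|⟨h1,h2⟩ <;>
    rcases h with h|h <;> rw [h1] at h <;> first | omega | (exact absurd h (by decide))

lemma cast_two {x : ℤ} (h : (x:ZMod 4) = 2) : x % 4 = 2 := by
  rcases mod4_cases x with ⟨h1,h2⟩|⟨h1,h2⟩|⟨h1,h2⟩|⟨h1,h2⟩ <;>
    rw [h1] at h <;> first | omega | (exact absurd h (by decide))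

namespace Z4

/-! ### More Z4 identities -/

lemma cnj_rmul (x : Z4) : cnj (rmul x) = rmul (cnj x) := by
  ext <;> simp [cnj, rmul] <;> ring

lemma cnj_rpow (t : ℕ) (x : Z4) : cnj (rpow t x) = rpow t (cnj x) := by
  induction t with
  | zero => simp [rpow]
  | succ k ih => rw [rpow_succ, rpow_succ, cnj_rmul, ih]

lemma mul_rmul_left (x y : Z4) : mul (rmul x) y = rmul (mul x y) := by
  ext <;> simp [mul, rmul] <;> ring

lemma mul_rpow_left (t : ℕ) (x y : Z4) : mul (rpow t x) y = rpow t (mul x y) := by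
  induction t with
  | zero => simp [rpow]
  | succ k ih => rw [rpow_succ, rpow_succ, mul_rmul_left, ih]

lemma add_rmul (x y : Z4) : add (rmul x) (rmul y) = rmul (add x y) := by
  ext <;> simp [add, rmul] <;> ring

lemma add_rpow (t : ℕ) (x y : Z4) : add (rpow t x) (rpow t y) = rpow t (add x y) := by
  induction t with
  | zero => simp [rpow]
  | succ k ih => rw [rpow_succ, rpow_succ, rpow_succ, add_rmul, ih]

lemma add_cnj_self (e : Z4) : add e (cnj e) = toZ4 (2 * e.a, e.b - e.d) := by
  ext <;> simp [add, cnj, toZ4] <;> ring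

lemma pmul_ps_ps (x y : ℤ × ℤ) : pmul (ps x) (ps y) = ps (ps (pmul x y)) := by
  rw [Prod.ext_iff]
  constructor <;> simp [pmul, ps] <;> ring

lemma pmul_pspow (t : ℕ) (x y : ℤ × ℤ) :
    pmul (pspow t x) (pspow t y) = pspow (2*t) (pmul x y) := by
  induction t with
  | zero => simp [pspow]
  | succ k ih =>
    have e : 2 * (k+1) = (2*k + 1) + 1 := by ring
    rw [pspow_succ, pspow_succ, pmul_ps_ps, ih, e, pspow_succ, pspow_succ]

/-! ### Powers of ω as Z4 elements -/

def o0 : Z4 := ⟨1,0,0,0⟩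
def o1 : Z4 := ⟨0,1,0,0⟩
def o2 : Z4 := ⟨0,0,1,0⟩
def o3 : Z4 := ⟨0,0,0,1⟩

lemma toC_o0 : toC o0 = omg ^ 0 := by simp [toC, o0]
lemma toC_o1 : toC o1 = omg ^ 1 := by simp [toC, o1]
lemma toC_o2 : toC o2 = omg ^ 2 := by simp [toC, o2]
lemma toC_o3 : toC o3 = omg ^ 3 := by simp [toC, o3]

lemma mul_cnj_o0 (x : Z4) : mul x (cnj o0) = x := by
  ext <;> simp [mul, cnj, o0]
lemma mul_cnj_o1 (x : Z4) : mul x (cnj o1) = ⟨x.b, x.c, x.d, -x.a⟩ := by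
  ext <;> simp [mul, cnj, o1]
lemma mul_cnj_o2 (x : Z4) : mul x (cnj o2) = ⟨x.c, x.d, -x.a, -x.b⟩ := by
  ext <;> simp [mul, cnj, o2]
lemma mul_cnj_o3 (x : Z4) : mul x (cnj o3) = ⟨x.d, -x.a, -x.b, -x.c⟩ := by
  ext <;> simp [mul, cnj, o3]

lemma Ngamma (α β K : Z4) (hK : K = o0 ∨ K = o1 ∨ K = o2 ∨ K = o3) :
    mul (add α (mul β K)) (cnj (add α (mul β K))) =
      add (add (mul α (cnj α)) (mul β (cnj β)))
        (add (mul (mul α (cnj β)) (cnj K)) (cnj (mul (mul α (cnj β)) (cnj K)))) := by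
  rcases hK with rfl|rfl|rfl|rfl <;>
    · ext <;> simp only [mul, add, cnj, o0, o1, o2, o3,
        mul_zero, mul_one, mul_neg, zero_mul, one_mul, neg_zero, neg_neg,
        add_zero, zero_add, sub_zero, zero_sub, sub_neg_eq_add] <;> ring

end Z4

namespace Z4

/-! ### Complex power juggling -/

lemma pow_key (M e : ℕ) (j : ℤ) (he : (e:ℤ) + j = M) :
    (rt2 : ℂ) ^ (M:ℕ) = rt2 ^ (e:ℕ) * rt2 ^ j := by
  rw [← zpow_natCast rt2 M, ← zpow_natCast rt2 e, ← zpow_add₀ rt2_ne, he]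

lemma pow_split (A B : ℂ) (M e : ℕ) (j : ℤ) (he : (e:ℤ) + j = M)
    (h : A / rt2 ^ M * rt2 ^ j = B) : A = rt2 ^ e * B := by
  have hM : (rt2:ℂ) ^ M ≠ 0 := pow_ne_zero _ rt2_ne
  calc A = A / rt2 ^ M * rt2 ^ M := by field_simp
  _ = A / rt2 ^ M * (rt2 ^ e * rt2 ^ j) := by rw [← pow_key M e j he]
  _ = (A / rt2 ^ M * rt2 ^ j) * rt2 ^ e := by ring
  _ = rt2 ^ e * B := by rw [h]; ring

lemma pow_split' (A B : ℂ) (M e : ℕ) (j : ℤ) (he : (e:ℤ) + j = M)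
    (h : A = rt2 ^ e * B) : A / rt2 ^ M * rt2 ^ j = B := by
  have hM : (rt2:ℂ) ^ M ≠ 0 := pow_ne_zero _ rt2_ne
  have hj : (rt2:ℂ) ^ j ≠ 0 := zpow_ne_zero _ rt2_ne
  have he' : (rt2:ℂ) ^ e ≠ 0 := pow_ne_zero _ rt2_ne
  rw [h, pow_key M e j he]
  field_simp

/-! ### The main IsSde builder -/

lemma isSde_general (X : Z4) (M e : ℕ) (D' : ℤ × ℤ)
    (hX : X = rpow e (toZ4 D')) (hD : D'.1 % 2 = 1) (he : e ≤ M) :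
    IsSde (toC X / rt2 ^ M) ((M:ℤ) - e) := by
  constructor
  · rw [zomega_iff]
    refine ⟨toZ4 D', ?_⟩
    apply pow_split' (toC X) (toC (toZ4 D')) M e ((M:ℤ) - e) (by omega)
    rw [hX, toC_rpow]
  · intro j' hj'
    by_contra hlt
    push_neg at hlt
    obtain ⟨δ, hδ⟩ := (zomega_iff _).1 hj'
    set e' := (M - j').toNat with he'def
    have he' : (e' : ℤ) = (M:ℤ) - j' := by
      rw [he'def]; rw [Int.toNat_of_nonneg]; omega
    have hXe : X = rpow e' δ := by
      apply toC_injective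
      rw [toC_rpow]
      exact pow_split (toC X) (toC δ) M e' j' (by omega) hδ
    have hee : e + ((e' - e - 1) + 1) = e' := by omega
    have : rpow e (toZ4 D') = rpow e (rpow ((e' - e - 1) + 1) δ) := by
      rw [← hX, hXe, ← rpow_add, hee]
    have h2 : toZ4 D' = rmul (rpow (e' - e - 1) δ) := by
      rw [← rpow_succ]
      exact rpow_inj e this
    have h3 := parity_of_dvd (rpow (e' - e - 1) δ)
    rw [← h2] at h3
    simp [toZ4] at h3
    omega

/-! ### Exact division of pairs by powers of √2 -/

lemma pdiv1 (D : ℤ × ℤ) (h1 : D.1 % 2 = 0) (h2 : D.2 % 2 = 1) :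
    ∃ D', D = pspow 1 D' ∧ D'.1 % 2 = 1 := by
  refine ⟨(D.2, D.1/2), ?_, by simpa using h2⟩
  have : pspow 1 ((D.2, D.1/2) : ℤ × ℤ) = ps (D.2, D.1/2) := by
    rw [pspow_succ]; simp [pspow]
  rw [this]
  rw [Prod.ext_iff]
  constructor <;> simp [ps] <;> omega

lemma pdiv2 (D : ℤ × ℤ) (h1 : D.1 % 4 = 2) (h2 : D.2 % 2 = 0) :
    ∃ D', D = pspow 2 D' ∧ D'.1 % 2 = 1 := by
  refine ⟨(D.1/2, D.2/2), ?_, by simp; omega⟩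
  have : pspow 2 ((D.1/2, D.2/2) : ℤ × ℤ) = ps (ps (D.1/2, D.2/2)) := by
    rw [show (2:ℕ) = 1 + 1 from rfl, pspow_succ, pspow_succ]; simp [pspow]
  rw [this]
  rw [Prod.ext_iff]
  constructor <;> simp [ps] <;> omega

lemma pdiv3 (D : ℤ × ℤ) (h1 : D.1 % 4 = 0) (h2 : D.2 % 4 = 2) :
    ∃ D', D = pspow 3 D' ∧ D'.1 % 2 = 1 := by
  refine ⟨(D.2/2, D.1/4), ?_, by simp; omega⟩
  have : pspow 3 ((D.2/2, D.1/4) : ℤ × ℤ) = ps (ps (ps (D.2/2, D.1/4))) := by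
    rw [show (3:ℕ) = 1 + 1 + 1 from rfl, pspow_succ, pspow_succ, pspow_succ]; simp [pspow]
  rw [this]
  rw [Prod.ext_iff]
  constructor <;> simp [ps] <;> omega

/-! ### The finishing lemma -/

lemma finish (z w : ℂ) (α β u₁ : Z4) (m t j k : ℕ) (K : Z4) (D' R : ℤ × ℤ)
    (hzv : z = toC α / rt2 ^ m) (hwv : w = toC β / rt2 ^ m)
    (hKC : toC K = omg ^ k)
    (hKor : K = o0 ∨ K = o1 ∨ K = o2 ∨ K = o3)
    (hXY : add (mul α (cnj α)) (mul β (cnj β)) = rpow t (toZ4 R))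
    (hU : mul α (cnj β) = rpow t u₁)
    (hD : R + (2 * (mul u₁ (cnj K)).a, (mul u₁ (cnj K)).b - (mul u₁ (cnj K)).d) = pspow j D')
    (hD1 : D'.1 % 2 = 1)
    (hle : t + j ≤ 2*m + 2) :
    IsSde (((z + w * omg ^ k) / rt2) * (starRingEnd ℂ) ((z + w * omg ^ k) / rt2))
      ((2*m+2 : ℤ) - (t + j)) := by
  set γ : Z4 := add α (mul β K) with hγ
  have step1 : z + w * omg ^ k = toC γ / rt2 ^ m := by
    rw [hzv, hwv, hγ, toC_add, toC_mul, hKC]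
    ring
  have step2 : (z + w * omg ^ k) / rt2 = toC γ / rt2 ^ (m+1) := by
    rw [step1, pow_succ]
    ring
  have step3 : ((z + w * omg ^ k) / rt2) * (starRingEnd ℂ) ((z + w * omg ^ k) / rt2)
      = toC (mul γ (cnj γ)) / rt2 ^ (2*m+2) := by
    rw [step2, map_div₀, map_pow, conj_rt2, ← toC_cnj]
    rw [div_mul_div_comm, ← toC_mul, ← pow_add]
    have : (m+1) + (m+1) = 2*m+2 := by omega
    rw [this]
  have hUK : mul (mul α (cnj β)) (cnj K) = rpow t (mul u₁ (cnj K)) := by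
    rw [hU, mul_rpow_left]
  have step4 : mul γ (cnj γ) = rpow (t + j) (toZ4 D') := by
    rw [hγ, Ngamma α β K hKor, hXY, hUK, cnj_rpow, add_rpow, add_cnj_self,
      add_rpow, toZ4_add, hD, ← rpow_toZ4, ← rpow_add]
  have hfin := isSde_general (mul γ (cnj γ)) (2*m+2) (t+j) D' step4 hD1 hle
  rw [step3]
  have harith : ((2*m+2 : ℕ) : ℤ) - ((t+j : ℕ) : ℤ) = (2*m+2 : ℤ) - (t + j) := by
    push_cast; ring
  rw [← harith]
  exact hfin

end Z4

open Z4 in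
/-- For a unit vector (z, w) over Z[1/√2, i] with sde(|z|², √2) ≥ 4, each shift
s ∈ {−1, 0, 1} of sde(|·|²) is achieved by some k ∈ {0, 1, 2, 3}. -/
theorem stmt12 (z w : ℂ) (hz : ZRoot2i z) (hw : ZRoot2i w)
    (hunit : z * (starRingEnd ℂ) z + w * (starRingEnd ℂ) w = 1)
    (n : ℤ) (hn : IsSde (z * (starRingEnd ℂ) z) n) (h4 : 4 ≤ n)
    (s : ℤ) (hs : s ∈ ({-1, 0, 1} : Set ℤ)) :
    ∃ k : ℕ, k ≤ 3 ∧ ∃ n' : ℤ,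
      IsSde (((z + w * omg ^ k) / rt2) * (starRingEnd ℂ) ((z + w * omg ^ k) / rt2)) n' ∧
      n' - n = s := by
  classical
  -- common denominator
  obtain ⟨uz, hzom, mz, hzeq⟩ := hz
  obtain ⟨uw, hwom, mw, hweq⟩ := hw
  obtain ⟨az, hazeq⟩ := (zomega_iff uz).1 hzom
  obtain ⟨aw, haweq⟩ := (zomega_iff uw).1 hwom
  set m : ℕ := max mz mw with hm
  set α : Z4 := rpow (m - mz) az with hα
  set β : Z4 := rpow (m - mw) aw with hβ
  have hrt2m : ∀ i : ℕ, (rt2:ℂ) ^ i ≠ 0 := fun i => pow_ne_zero _ rt2_ne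
  have hzv : z = toC α / rt2 ^ m := by
    rw [hzeq, hazeq, hα, toC_rpow]
    rw [div_eq_div_iff (hrt2m mz) (hrt2m m)]
    rw [show rt2 ^ (m - mz) * az.toC * rt2 ^ mz = az.toC * (rt2 ^ (m - mz) * rt2 ^ mz) by ring,
      ← pow_add, show m - mz + mz = m by omega]
  have hwv : w = toC β / rt2 ^ m := by
    rw [hweq, haweq, hβ, toC_rpow]
    rw [div_eq_div_iff (hrt2m mw) (hrt2m m)]
    rw [show rt2 ^ (m - mw) * aw.toC * rt2 ^ mw = aw.toC * (rt2 ^ (m - mw) * rt2 ^ mw) by ring,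
      ← pow_add, show m - mw + mw = m by omega]
  -- |z|² and |w|² as Z4 elements
  have hzz : z * (starRingEnd ℂ) z = toC (toZ4 (N α)) / rt2 ^ (2*m) := by
    rw [hzv, map_div₀, map_pow, conj_rt2, ← toC_cnj, div_mul_div_comm, ← toC_mul,
      ← pow_add, N_spec, show m + m = 2*m by omega]
  have hww : w * (starRingEnd ℂ) w = toC (toZ4 (N β)) / rt2 ^ (2*m) := by
    rw [hwv, map_div₀, map_pow, conj_rt2, ← toC_cnj, div_mul_div_comm, ← toC_mul,
      ← pow_add, N_spec, show m + m = 2*m by omega]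
  -- the unit equation as a pair equation
  have hpair : N α + N β = pspow (2*m) (1, 0) := by
    apply toZ4_inj
    rw [← toZ4_add]
    apply toC_injective
    have h1 : toC (add (toZ4 (N α)) (toZ4 (N β))) = rt2 ^ (2*m) := by
      rw [toC_add]
      have h2 := hunit
      rw [hzz, hww, ← add_div, div_eq_one_iff_eq (hrt2m (2*m))] at h2
      exact h2
    rw [h1, pspow_two]
    rw [pow_mul, rt2_sq]
    simp [toC, toZ4]
  -- sde hypothesis analysis
  have hn2m : n ≤ 2*m := by
    apply hn.2
    rw [hzz, zomega_iff]
    exact ⟨toZ4 (N α), pow_split' _ _ (2*m) 0 (2*(m:ℤ)) (by push_cast; ring)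
      (by rw [pow_zero, one_mul])⟩
  set t : ℕ := (2*(m:ℤ) - n).toNat with htdef
  have htZ : (t:ℤ) = 2*(m:ℤ) - n := by rw [htdef]; omega
  obtain ⟨γ0, hγ0⟩ := (zomega_iff _).1 hn.1
  have hNαt : toZ4 (N α) = rpow t γ0 := by
    apply toC_injective
    rw [toC_rpow]
    apply pow_split _ _ (2*m) t n (by omega)
    rw [← hzz]
    exact hγ0
  obtain ⟨x', hγ0x, hNαp⟩ := real_extract t (N α) γ0 hNαt
  -- x' has odd first coordinate, by minimality of the sde
  have hx'odd : x'.1 % 2 = 1 := by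
    rcases Int.emod_two_eq_zero_or_one x'.1 with he | ho
    · exfalso
      have hps : ps (x'.2, x'.1/2) = x' := by
        rw [Prod.ext_iff]
        constructor <;> simp [ps] <;> omega
      have hdvd : toZ4 (N α) = rpow (t+1) (toZ4 (x'.2, x'.1/2)) := by
        rw [rpow_succ', rmul_toZ4, hps, ← hγ0x, hNαt]
      have hzom2 : Zomega (z * (starRingEnd ℂ) z * rt2 ^ (n - 1)) := by
        rw [zomega_iff]
        refine ⟨toZ4 (x'.2, x'.1/2), ?_⟩
        rw [hzz]
        apply pow_split' _ _ (2*m) (t+1) (n-1) (by push_cast; omega)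
        rw [hdvd, toC_rpow]
      have := hn.2 (n-1) hzom2
      omega
    · exact ho
  -- the companion pair y'
  set nn : ℕ := n.toNat with hnndef
  have hnnZ : (nn : ℤ) = n := by rw [hnndef]; omega
  set R : ℤ × ℤ := pspow nn (1, 0) with hRdef
  have hR4 : R.1 % 4 = 0 ∧ R.2 % 4 = 0 := by
    have h44 : pspow 4 ((1:ℤ), (0:ℤ)) = ((4:ℤ), (0:ℤ)) := by
      rw [show (4:ℕ) = 1+1+1+1 from rfl, pspow_succ, pspow_succ, pspow_succ, pspow_succ]
      simp [pspow, ps]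
    have : R = pspow (nn - 4) ((4:ℤ), (0:ℤ)) := by
      rw [hRdef]
      conv_lhs => rw [show nn = (nn - 4) + 4 by omega]
      rw [pspow_add, h44]
    have h2 : pspow (nn - 4) ((4:ℤ), (0:ℤ)) = (2 * (pspow (nn-4) ((2:ℤ), (0:ℤ))).1, 2 * (pspow (nn-4) ((2:ℤ), (0:ℤ))).2) := by
      have := pspow_double (nn - 4) ((2:ℤ), (0:ℤ))
      simpa using this
    have h3 : pspow (nn - 4) ((2:ℤ), (0:ℤ)) = (2 * (pspow (nn-4) ((1:ℤ), (0:ℤ))).1, 2 * (pspow (nn-4) ((1:ℤ), (0:ℤ))).2) := by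
      have := pspow_double (nn - 4) ((1:ℤ), (0:ℤ))
      simpa using this
    rw [this, h2, h3]
    omega
  set yp : ℤ × ℤ := R - x' with hypdef
  have hxy : x' + yp = R := by rw [hypdef]; abel
  have hNβp : N β = pspow t yp := by
    have hts : t + nn = 2*m := by omega
    have h1 : N β = pspow (2*m) (1,0) - N α := by
      rw [← hpair]; abel
    rw [h1, hNαp, ← hts, pspow_add, ← hRdef, ← pspow_sub, hypdef]
  -- extraction of u₁ with N u₁ = pmul x' yp
  have hyp1 : yp.1 % 2 = 1 := by
    have : yp.1 = R.1 - x'.1 := by rw [hypdef]; simp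
    omega
  have hwodd : (pmul x' yp).1 % 2 = 1 := by
    have h1 : (pmul x' yp).1 = x'.1 * yp.1 + 2*x'.2*yp.2 := rfl
    have h2 : (x'.1 * yp.1) % 2 = 1 := by
      rw [Int.mul_emod, hx'odd, hyp1]
      norm_num
    rw [h1, show 2*x'.2*yp.2 = 2*(x'.2*yp.2) by ring, Int.add_mul_emod_self_left, h2]
  have hNU : N (mul α (cnj β)) = pspow (2*t) (pmul x' yp) := by
    rw [N_mulconj, hNαp, hNβp, pmul_pspow]
  obtain ⟨u₁, hU, hNu₁⟩ := extract t (mul α (cnj β)) (pmul x' yp) hNU hwodd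
  -- pass to ZMod 4
  have hp4 : ((x'.1 : ZMod 4) = 1 ∨ (x'.1 : ZMod 4) = 3) := odd_cast hx'odd
  have hy1c : ((yp.1 : ℤ) : ZMod 4) = -(x'.1 : ZMod 4) := by
    have h1 : yp.1 = R.1 - x'.1 := by rw [hypdef]; simp
    rw [h1]
    push_cast
    rw [zero4_cast hR4.1]
    ring
  have hy2c : ((yp.2 : ℤ) : ZMod 4) = -(x'.2 : ZMod 4) := by
    have h1 : yp.2 = R.2 - x'.2 := by rw [hypdef]; simp
    rw [h1]
    push_cast
    rw [zero4_cast hR4.2]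
    ring
  have c1 := congrArg (fun v : ℤ × ℤ => ((v.1 : ZMod 4))) hNu₁
  have c2 := congrArg (fun v : ℤ × ℤ => ((v.2 : ZMod 4))) hNu₁
  simp only [N, pmul] at c1 c2
  push_cast at c1 c2
  rw [hy1c, hy2c] at c1 c2
  have hP : (u₁.a : ZMod 4)^2 + (u₁.b : ZMod 4)^2 + (u₁.c : ZMod 4)^2 + (u₁.d : ZMod 4)^2
      = -((x'.1 : ZMod 4)^2 + 2*(x'.2 : ZMod 4)^2) := by
    linear_combination c1
  have hQ : (u₁.a : ZMod 4)*(u₁.b : ZMod 4) + (u₁.b : ZMod 4)*(u₁.c : ZMod 4)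
      + (u₁.c : ZMod 4)*(u₁.d : ZMod 4) - (u₁.d : ZMod 4)*(u₁.a : ZMod 4)
      = -(2*(x'.1 : ZMod 4)*(x'.2 : ZMod 4)) := by
    linear_combination c2
  -- the pair (X+Y) as rpow
  have hXY : add (mul α (cnj α)) (mul β (cnj β)) = rpow t (toZ4 R) := by
    rw [N_spec, N_spec, hNαp, hNβp, ← rpow_toZ4, ← rpow_toZ4, add_rpow, toZ4_add, hxy]
  simp only [Set.mem_insert_iff, Set.mem_singleton_iff] at hs
  rcases hs with rfl | rfl | rfl
  · -- s = -1 : j = 3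
    rcases zmod4_key3 (x'.1 : ZMod 4) (x'.2 : ZMod 4) (u₁.a : ZMod 4) (u₁.b : ZMod 4)
      (u₁.c : ZMod 4) (u₁.d : ZMod 4) hp4 hP hQ with hc | hc | hc | hc
    · -- j = 3, k = 0
      have hE : mul u₁ (cnj o0) = u₁ := mul_cnj_o0 u₁
      have hEa : (mul u₁ (cnj o0)).a = u₁.a := by rw [hE]
      have hEbd : (mul u₁ (cnj o0)).b - (mul u₁ (cnj o0)).d = u₁.b - u₁.d := by rw [hE]
      have hxo : (u₁.a) % 2 = 0 := cast_even (by push_cast; exact hc.1)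
      have hq : (u₁.b - u₁.d) % 4 = 2 := cast_two (by push_cast; exact hc.2.elim id id)
      have hc1 : (R + (2 * (mul u₁ (cnj o0)).a, (mul u₁ (cnj o0)).b - (mul u₁ (cnj o0)).d)).1 % 4 = 0 := by
        rw [Prod.fst_add, hEa]; simp; omega
      have hc2 : (R + (2 * (mul u₁ (cnj o0)).a, (mul u₁ (cnj o0)).b - (mul u₁ (cnj o0)).d)).2 % 4 = 2 := by
        rw [Prod.snd_add, hEbd]; simp; omega
      obtain ⟨D', hD, hD1⟩ := pdiv3 _ hc1 hc2
      exact ⟨0, by norm_num, (2*(m:ℤ)+2) - ((t:ℤ) + 3), 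
        Z4.finish z w α β u₁ m t 3 0 o0 D' R hzv hwv toC_o0 (Or.inl rfl) hXY hU hD hD1 (by omega),
        by push_cast; omega⟩
    · -- j = 3, k = 1
      have hE : mul u₁ (cnj o1) = (⟨u₁.b, u₁.c, u₁.d, -u₁.a⟩ : Z4) := mul_cnj_o1 u₁
      have hEa : (mul u₁ (cnj o1)).a = u₁.b := by rw [hE]
      have hEbd : (mul u₁ (cnj o1)).b - (mul u₁ (cnj o1)).d = u₁.c + u₁.a := by rw [hE]; ring
      have hxo : (u₁.b) % 2 = 0 := cast_even (by push_cast; exact hc.1)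
      have hq : (u₁.c + u₁.a) % 4 = 2 := cast_two (by push_cast; exact hc.2.elim id id)
      have hc1 : (R + (2 * (mul u₁ (cnj o1)).a, (mul u₁ (cnj o1)).b - (mul u₁ (cnj o1)).d)).1 % 4 = 0 := by
        rw [Prod.fst_add, hEa]; simp; omega
      have hc2 : (R + (2 * (mul u₁ (cnj o1)).a, (mul u₁ (cnj o1)).b - (mul u₁ (cnj o1)).d)).2 % 4 = 2 := by
        rw [Prod.snd_add, hEbd]; simp; omega
      obtain ⟨D', hD, hD1⟩ := pdiv3 _ hc1 hc2
      exact ⟨1, by norm_num, (2*(m:ℤ)+2) - ((t:ℤ) + 3), 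
        Z4.finish z w α β u₁ m t 3 1 o1 D' R hzv hwv toC_o1 (Or.inr (Or.inl rfl)) hXY hU hD hD1 (by omega),
        by push_cast; omega⟩
    · -- j = 3, k = 2
      have hE : mul u₁ (cnj o2) = (⟨u₁.c, u₁.d, -u₁.a, -u₁.b⟩ : Z4) := mul_cnj_o2 u₁
      have hEa : (mul u₁ (cnj o2)).a = u₁.c := by rw [hE]
      have hEbd : (mul u₁ (cnj o2)).b - (mul u₁ (cnj o2)).d = u₁.d + u₁.b := by rw [hE]; ring
      have hxo : (u₁.c) % 2 = 0 := cast_even (by push_cast; exact hc.1)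
      have hq : (u₁.d + u₁.b) % 4 = 2 := cast_two (by push_cast; exact hc.2.elim id id)
      have hc1 : (R + (2 * (mul u₁ (cnj o2)).a, (mul u₁ (cnj o2)).b - (mul u₁ (cnj o2)).d)).1 % 4 = 0 := by
        rw [Prod.fst_add, hEa]; simp; omega
      have hc2 : (R + (2 * (mul u₁ (cnj o2)).a, (mul u₁ (cnj o2)).b - (mul u₁ (cnj o2)).d)).2 % 4 = 2 := by
        rw [Prod.snd_add, hEbd]; simp; omega
      obtain ⟨D', hD, hD1⟩ := pdiv3 _ hc1 hc2
      exact ⟨2, by norm_num, (2*(m:ℤ)+2) - ((t:ℤ) + 3), 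
        Z4.finish z w α β u₁ m t 3 2 o2 D' R hzv hwv toC_o2 (Or.inr (Or.inr (Or.inl rfl))) hXY hU hD hD1 (by omega),
        by push_cast; omega⟩
    · -- j = 3, k = 3
      have hE : mul u₁ (cnj o3) = (⟨u₁.d, -u₁.a, -u₁.b, -u₁.c⟩ : Z4) := mul_cnj_o3 u₁
      have hEa : (mul u₁ (cnj o3)).a = u₁.d := by rw [hE]
      have hEbd : (mul u₁ (cnj o3)).b - (mul u₁ (cnj o3)).d = u₁.c - u₁.a := by rw [hE]; ring
      have hxo : (u₁.d) % 2 = 0 := cast_even (by push_cast; exact hc.1)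
      have hq : (u₁.c - u₁.a) % 4 = 2 := cast_two (by push_cast; exact hc.2.elim id id)
      have hc1 : (R + (2 * (mul u₁ (cnj o3)).a, (mul u₁ (cnj o3)).b - (mul u₁ (cnj o3)).d)).1 % 4 = 0 := by
        rw [Prod.fst_add, hEa]; simp; omega
      have hc2 : (R + (2 * (mul u₁ (cnj o3)).a, (mul u₁ (cnj o3)).b - (mul u₁ (cnj o3)).d)).2 % 4 = 2 := by
        rw [Prod.snd_add, hEbd]; simp; omega
      obtain ⟨D', hD, hD1⟩ := pdiv3 _ hc1 hc2
      exact ⟨3, by norm_num, (2*(m:ℤ)+2) - ((t:ℤ) + 3), 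
        Z4.finish z w α β u₁ m t 3 3 o3 D' R hzv hwv toC_o3 (Or.inr (Or.inr (Or.inr rfl))) hXY hU hD hD1 (by omega),
        by push_cast; omega⟩
  · -- s = 0 : j = 2
    rcases zmod4_key2 (x'.1 : ZMod 4) (x'.2 : ZMod 4) (u₁.a : ZMod 4) (u₁.b : ZMod 4)
      (u₁.c : ZMod 4) (u₁.d : ZMod 4) hp4 hP hQ with hc | hc | hc | hc
    · -- j = 2, k = 0
      have hE : mul u₁ (cnj o0) = u₁ := mul_cnj_o0 u₁
      have hEa : (mul u₁ (cnj o0)).a = u₁.a := by rw [hE]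
      have hEbd : (mul u₁ (cnj o0)).b - (mul u₁ (cnj o0)).d = u₁.b - u₁.d := by rw [hE]
      have hxo : (u₁.a) % 2 = 1 := cast_odd (by push_cast; exact hc.1)
      have hq : (u₁.b - u₁.d) % 2 = 0 := cast_even (by push_cast; exact hc.2)
      have hc1 : (R + (2 * (mul u₁ (cnj o0)).a, (mul u₁ (cnj o0)).b - (mul u₁ (cnj o0)).d)).1 % 4 = 2 := by
        rw [Prod.fst_add, hEa]; simp; omega
      have hc2 : (R + (2 * (mul u₁ (cnj o0)).a, (mul u₁ (cnj o0)).b - (mul u₁ (cnj o0)).d)).2 % 2 = 0 := by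
        rw [Prod.snd_add, hEbd]; simp; omega
      obtain ⟨D', hD, hD1⟩ := pdiv2 _ hc1 hc2
      exact ⟨0, by norm_num, (2*(m:ℤ)+2) - ((t:ℤ) + 2), 
        Z4.finish z w α β u₁ m t 2 0 o0 D' R hzv hwv toC_o0 (Or.inl rfl) hXY hU hD hD1 (by omega),
        by push_cast; omega⟩
    · -- j = 2, k = 1
      have hE : mul u₁ (cnj o1) = (⟨u₁.b, u₁.c, u₁.d, -u₁.a⟩ : Z4) := mul_cnj_o1 u₁
      have hEa : (mul u₁ (cnj o1)).a = u₁.b := by rw [hE]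
      have hEbd : (mul u₁ (cnj o1)).b - (mul u₁ (cnj o1)).d = u₁.c + u₁.a := by rw [hE]; ring
      have hxo : (u₁.b) % 2 = 1 := cast_odd (by push_cast; exact hc.1)
      have hq : (u₁.c + u₁.a) % 2 = 0 := cast_even (by push_cast; exact hc.2)
      have hc1 : (R + (2 * (mul u₁ (cnj o1)).a, (mul u₁ (cnj o1)).b - (mul u₁ (cnj o1)).d)).1 % 4 = 2 := by
        rw [Prod.fst_add, hEa]; simp; omega
      have hc2 : (R + (2 * (mul u₁ (cnj o1)).a, (mul u₁ (cnj o1)).b - (mul u₁ (cnj o1)).d)).2 % 2 = 0 := by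
        rw [Prod.snd_add, hEbd]; simp; omega
      obtain ⟨D', hD, hD1⟩ := pdiv2 _ hc1 hc2
      exact ⟨1, by norm_num, (2*(m:ℤ)+2) - ((t:ℤ) + 2), 
        Z4.finish z w α β u₁ m t 2 1 o1 D' R hzv hwv toC_o1 (Or.inr (Or.inl rfl)) hXY hU hD hD1 (by omega),
        by push_cast; omega⟩
    · -- j = 2, k = 2
      have hE : mul u₁ (cnj o2) = (⟨u₁.c, u₁.d, -u₁.a, -u₁.b⟩ : Z4) := mul_cnj_o2 u₁
      have hEa : (mul u₁ (cnj o2)).a = u₁.c := by rw [hE]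
      have hEbd : (mul u₁ (cnj o2)).b - (mul u₁ (cnj o2)).d = u₁.d + u₁.b := by rw [hE]; ring
      have hxo : (u₁.c) % 2 = 1 := cast_odd (by push_cast; exact hc.1)
      have hq : (u₁.d + u₁.b) % 2 = 0 := cast_even (by push_cast; exact hc.2)
      have hc1 : (R + (2 * (mul u₁ (cnj o2)).a, (mul u₁ (cnj o2)).b - (mul u₁ (cnj o2)).d)).1 % 4 = 2 := by
        rw [Prod.fst_add, hEa]; simp; omega
      have hc2 : (R + (2 * (mul u₁ (cnj o2)).a, (mul u₁ (cnj o2)).b - (mul u₁ (cnj o2)).d)).2 % 2 = 0 := by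
        rw [Prod.snd_add, hEbd]; simp; omega
      obtain ⟨D', hD, hD1⟩ := pdiv2 _ hc1 hc2
      exact ⟨2, by norm_num, (2*(m:ℤ)+2) - ((t:ℤ) + 2), 
        Z4.finish z w α β u₁ m t 2 2 o2 D' R hzv hwv toC_o2 (Or.inr (Or.inr (Or.inl rfl))) hXY hU hD hD1 (by omega),
        by push_cast; omega⟩
    · -- j = 2, k = 3
      have hE : mul u₁ (cnj o3) = (⟨u₁.d, -u₁.a, -u₁.b, -u₁.c⟩ : Z4) := mul_cnj_o3 u₁
      have hEa : (mul u₁ (cnj o3)).a = u₁.d := by rw [hE]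
      have hEbd : (mul u₁ (cnj o3)).b - (mul u₁ (cnj o3)).d = u₁.c - u₁.a := by rw [hE]; ring
      have hxo : (u₁.d) % 2 = 1 := cast_odd (by push_cast; exact hc.1)
      have hq : (u₁.c - u₁.a) % 2 = 0 := cast_even (by push_cast; exact hc.2)
      have hc1 : (R + (2 * (mul u₁ (cnj o3)).a, (mul u₁ (cnj o3)).b - (mul u₁ (cnj o3)).d)).1 % 4 = 2 := by
        rw [Prod.fst_add, hEa]; simp; omega
      have hc2 : (R + (2 * (mul u₁ (cnj o3)).a, (mul u₁ (cnj o3)).b - (mul u₁ (cnj o3)).d)).2 % 2 = 0 := by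
        rw [Prod.snd_add, hEbd]; simp; omega
      obtain ⟨D', hD, hD1⟩ := pdiv2 _ hc1 hc2
      exact ⟨3, by norm_num, (2*(m:ℤ)+2) - ((t:ℤ) + 2), 
        Z4.finish z w α β u₁ m t 2 3 o3 D' R hzv hwv toC_o3 (Or.inr (Or.inr (Or.inr rfl))) hXY hU hD hD1 (by omega),
        by push_cast; omega⟩
  · -- s = 1 : j = 1
    rcases zmod4_key1 (x'.1 : ZMod 4) (x'.2 : ZMod 4) (u₁.a : ZMod 4) (u₁.b : ZMod 4)
      (u₁.c : ZMod 4) (u₁.d : ZMod 4) hp4 hP hQ with hc | hc | hc | hc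
    · -- j = 1, k = 0
      have hE : mul u₁ (cnj o0) = u₁ := mul_cnj_o0 u₁
      have hEa : (mul u₁ (cnj o0)).a = u₁.a := by rw [hE]
      have hEbd : (mul u₁ (cnj o0)).b - (mul u₁ (cnj o0)).d = u₁.b - u₁.d := by rw [hE]
      have hq : (u₁.b - u₁.d) % 2 = 1 := cast_odd (by push_cast; exact hc)
      have hc1 : (R + (2 * (mul u₁ (cnj o0)).a, (mul u₁ (cnj o0)).b - (mul u₁ (cnj o0)).d)).1 % 2 = 0 := by
        rw [Prod.fst_add, hEa]; simp; omega
      have hc2 : (R + (2 * (mul u₁ (cnj o0)).a, (mul u₁ (cnj o0)).b - (mul u₁ (cnj o0)).d)).2 % 2 = 1 := by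
        rw [Prod.snd_add, hEbd]; simp; omega
      obtain ⟨D', hD, hD1⟩ := pdiv1 _ hc1 hc2
      exact ⟨0, by norm_num, (2*(m:ℤ)+2) - ((t:ℤ) + 1), 
        Z4.finish z w α β u₁ m t 1 0 o0 D' R hzv hwv toC_o0 (Or.inl rfl) hXY hU hD hD1 (by omega),
        by push_cast; omega⟩
    · -- j = 1, k = 1
      have hE : mul u₁ (cnj o1) = (⟨u₁.b, u₁.c, u₁.d, -u₁.a⟩ : Z4) := mul_cnj_o1 u₁
      have hEa : (mul u₁ (cnj o1)).a = u₁.b := by rw [hE]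
      have hEbd : (mul u₁ (cnj o1)).b - (mul u₁ (cnj o1)).d = u₁.c + u₁.a := by rw [hE]; ring
      have hq : (u₁.c + u₁.a) % 2 = 1 := cast_odd (by push_cast; exact hc)
      have hc1 : (R + (2 * (mul u₁ (cnj o1)).a, (mul u₁ (cnj o1)).b - (mul u₁ (cnj o1)).d)).1 % 2 = 0 := by
        rw [Prod.fst_add, hEa]; simp; omega
      have hc2 : (R + (2 * (mul u₁ (cnj o1)).a, (mul u₁ (cnj o1)).b - (mul u₁ (cnj o1)).d)).2 % 2 = 1 := by
        rw [Prod.snd_add, hEbd]; simp; omega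
      obtain ⟨D', hD, hD1⟩ := pdiv1 _ hc1 hc2
      exact ⟨1, by norm_num, (2*(m:ℤ)+2) - ((t:ℤ) + 1), 
        Z4.finish z w α β u₁ m t 1 1 o1 D' R hzv hwv toC_o1 (Or.inr (Or.inl rfl)) hXY hU hD hD1 (by omega),
        by push_cast; omega⟩
    · -- j = 1, k = 2
      have hE : mul u₁ (cnj o2) = (⟨u₁.c, u₁.d, -u₁.a, -u₁.b⟩ : Z4) := mul_cnj_o2 u₁
      have hEa : (mul u₁ (cnj o2)).a = u₁.c := by rw [hE]
      have hEbd : (mul u₁ (cnj o2)).b - (mul u₁ (cnj o2)).d = u₁.d + u₁.b := by rw [hE]; ring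
      have hq : (u₁.d + u₁.b) % 2 = 1 := cast_odd (by push_cast; exact hc)
      have hc1 : (R + (2 * (mul u₁ (cnj o2)).a, (mul u₁ (cnj o2)).b - (mul u₁ (cnj o2)).d)).1 % 2 = 0 := by
        rw [Prod.fst_add, hEa]; simp; omega
      have hc2 : (R + (2 * (mul u₁ (cnj o2)).a, (mul u₁ (cnj o2)).b - (mul u₁ (cnj o2)).d)).2 % 2 = 1 := by
        rw [Prod.snd_add, hEbd]; simp; omega
      obtain ⟨D', hD, hD1⟩ := pdiv1 _ hc1 hc2
      exact ⟨2, by norm_num, (2*(m:ℤ)+2) - ((t:ℤ) + 1), 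
        Z4.finish z w α β u₁ m t 1 2 o2 D' R hzv hwv toC_o2 (Or.inr (Or.inr (Or.inl rfl))) hXY hU hD hD1 (by omega),
        by push_cast; omega⟩
    · -- j = 1, k = 3
      have hE : mul u₁ (cnj o3) = (⟨u₁.d, -u₁.a, -u₁.b, -u₁.c⟩ : Z4) := mul_cnj_o3 u₁
      have hEa : (mul u₁ (cnj o3)).a = u₁.d := by rw [hE]
      have hEbd : (mul u₁ (cnj o3)).b - (mul u₁ (cnj o3)).d = u₁.c - u₁.a := by rw [hE]; ring
      have hq : (u₁.c - u₁.a) % 2 = 1 := cast_odd (by push_cast; exact hc)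
      have hc1 : (R + (2 * (mul u₁ (cnj o3)).a, (mul u₁ (cnj o3)).b - (mul u₁ (cnj o3)).d)).1 % 2 = 0 := by
        rw [Prod.fst_add, hEa]; simp; omega
      have hc2 : (R + (2 * (mul u₁ (cnj o3)).a, (mul u₁ (cnj o3)).b - (mul u₁ (cnj o3)).d)).2 % 2 = 1 := by
        rw [Prod.snd_add, hEbd]; simp; omega
      obtain ⟨D', hD, hD1⟩ := pdiv1 _ hc1 hc2
      exact ⟨3, by norm_num, (2*(m:ℤ)+2) - ((t:ℤ) + 1), 
        Z4.finish z w α β u₁ m t 1 3 o3 D' R hzv hwv toC_o3 (Or.inr (Or.inr (Or.inr rfl))) hXY hU hD hD1 (by omega),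
        by push_cast; omega⟩
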